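/- Fix n ≥ 1 and a, b ∈ ℕ with a ≥ 1. The number of prime u-parking functions of length n, where u_i = a + b·i for 0 ≤ i ≤ n-1, equals (a-b)·(a+(n-1)b)^{n-1} + b^n·(n-1)^{n-1}. -/

import Mathlib

/-- `#{j : a j < t}`. -/
def countLt {n : ℕ} (a : Fin n → ℕ) (t : ℕ) : ℕ :=
  (Finset.univ.filter fun j => a j < t).card

/-- `a` is a `u`-parking function: `#{j : a j < u i} ≥ i + 1` for all `i = 0, …, n-1`. -/
def IsUPF {n : ℕ} (u : Fin n → ℕ) (a : Fin n → ℕ) : Prop :=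
  ∀ i : Fin n, (i : ℕ) + 1 ≤ countLt a (u i)

/-- `a` is a prime `u`-parking function. -/
def IsPrimeUPF {n : ℕ} (u : Fin n → ℕ) (a : Fin n → ℕ) : Prop :=
  IsUPF u a ∧ ∀ i : Fin n, (i : ℕ) + 1 < n → (i : ℕ) + 1 < countLt a (u i)


open Finset

namespace Stmt4Aux

variable {α β : Type*} [Fintype α]

/-- number of entries of `f` below `t` -/
def cnt (f : α → ℕ) (t : ℕ) : ℕ := #(Finset.univ.filter fun j => f j < t)

/-- parking-function condition with thresholds `u` and length `card α` -/
def Cond (u : ℕ → ℕ) (f : α → ℕ) : Prop := ∀ i < Fintype.card α, i + 1 ≤ cnt f (u i)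

noncomputable def NC (α : Type*) [Fintype α] (u : ℕ → ℕ) : ℕ :=
  Nat.card {f : α → ℕ // Cond u f}

lemma cnt_mono (f : α → ℕ) {t t' : ℕ} (h : t ≤ t') : cnt f t ≤ cnt f t' := by
  apply Finset.card_le_card
  intro j hj
  simp only [mem_filter, mem_univ, true_and] at *
  omega

lemma cnt_le (f : α → ℕ) (t : ℕ) : cnt f t ≤ Fintype.card α := by
  classical
  simpa [cnt] using Finset.card_filter_le (univ : Finset α) (fun j => f j < t)

lemma cnt_comp [Fintype β] (e : β ≃ α) (f : α → ℕ) (t : ℕ) :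
    cnt (fun b => f (e b)) t = cnt f t := by
  unfold cnt
  apply Finset.card_bij (fun b _ => e b)
  · intro b hb; simp only [mem_filter, mem_univ, true_and] at *; exact hb
  · intro b₁ _ b₂ _ h; exact e.injective h
  · intro a ha
    simp only [mem_filter, mem_univ, true_and] at ha
    exact ⟨e.symm a, by simp only [mem_filter, mem_univ, true_and, Equiv.apply_symm_apply]; exact ha,
      by simp⟩

lemma NC_congr [Fintype β] (e : α ≃ β) (u : ℕ → ℕ) : NC α u = NC β u := by
  unfold NC
  apply Nat.card_congr
  have hc : Fintype.card α = Fintype.card β := Fintype.card_congr e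
  refine Equiv.subtypeEquiv (Equiv.arrowCongr e (Equiv.refl ℕ)) ?_
  intro f
  unfold Cond
  rw [← hc]
  have hcnt : ∀ t, cnt ((Equiv.arrowCongr e (Equiv.refl ℕ)) f) t = cnt f t := by
    intro t
    have : ((Equiv.arrowCongr e (Equiv.refl ℕ)) f) = fun b => f (e.symm b) := by
      funext b; simp [Equiv.arrowCongr]
    rw [this, cnt_comp e.symm]
  constructor
  · intro h i hi; rw [hcnt]; exact h i hi
  · intro h i hi; have := h i hi; rwa [hcnt] at this

lemma finite_cond (u : ℕ → ℕ) : Finite {f : α → ℕ // Cond u f} := by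
  rcases Nat.eq_zero_or_pos (Fintype.card α) with h0 | hpos
  · haveI : IsEmpty α := Fintype.card_eq_zero_iff.mp h0
    infer_instance
  · have key : ∀ f : {f : α → ℕ // Cond u f}, ∀ j, f.1 j < u (Fintype.card α - 1) := by
      rintro ⟨f, hf⟩ j
      have h1 := hf (Fintype.card α - 1) (by omega)
      have h2 : cnt f (u (Fintype.card α - 1)) ≤ Fintype.card α := cnt_le f _
      have h3 : (univ.filter fun j => f j < u (Fintype.card α - 1)) = univ := by
        apply Finset.eq_univ_of_card
        unfold cnt at h1 h2
        omega
      have := Finset.mem_univ j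
      rw [← h3] at this
      simpa using (Finset.mem_filter.mp this).2
    refine Finite.of_injective
      (fun f : {f : α → ℕ // Cond u f} =>
        (fun j => (⟨f.1 j, key f j⟩ : Fin (u (Fintype.card α - 1))))) ?_
    intro f g h
    apply Subtype.ext; funext j
    exact congrArg Fin.val (congrFun h j)

lemma NC_nil (h : Fintype.card α = 0) (u : ℕ → ℕ) : NC α u = 1 := by
  haveI : IsEmpty α := Fintype.card_eq_zero_iff.mp h
  unfold NC
  have : Unique {f : α → ℕ // Cond u f} := by
    refine ⟨⟨⟨fun j => 0, ?_⟩⟩, ?_⟩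
    · intro i hi; omega
    · rintro ⟨f, hf⟩
      apply Subtype.ext; funext j; exact (IsEmpty.false j).elim
  exact Nat.card_unique

lemma NC_zero_thresh (h0 : u 0 = 0) (hpos : 0 < Fintype.card α) : NC α u = 0 := by
  unfold NC
  rw [Nat.card_eq_zero]
  left
  constructor
  rintro ⟨f, hf⟩
  have := hf 0 hpos
  rw [h0] at this
  have : cnt f 0 = 0 := by
    unfold cnt
    simp
  omega

variable [DecidableEq α]



lemma card_filter_coe (s : Finset α) (p : α → Prop) [DecidablePred p] :
    #(univ.filter fun j : ↥s => p j.1) = #(s.filter p) := by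
  rw [univ_eq_attach, Finset.filter_attach, Finset.card_map, Finset.card_attach]

lemma cnt_split {u : ℕ → ℕ} (hu : Monotone u) {f : α → ℕ} {S : Finset α}
    (hS : ∀ j, f j < u 0 ↔ j ∈ S) (i : ℕ) :
    cnt f (u i) = S.card + cnt (fun j : ↥(Sᶜ : Finset α) => f j.1 - u 0) (u i - u 0) := by
  have h0i : u 0 ≤ u i := hu (Nat.zero_le i)
  have hsplit : (univ.filter fun j => f j < u i)
      = S ∪ ((Sᶜ : Finset α).filter fun j => f j < u i) := by
    ext j
    simp only [mem_filter, mem_univ, true_and, mem_union, Finset.mem_compl]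
    constructor
    · intro hj
      by_cases hjS : j ∈ S
      · exact Or.inl hjS
      · exact Or.inr ⟨hjS, hj⟩
    · rintro (hjS | ⟨_, hj⟩)
      · exact lt_of_lt_of_le ((hS j).mpr hjS) h0i
      · exact hj
  have hdisj : Disjoint S ((Sᶜ : Finset α).filter fun j => f j < u i) := by
    rw [Finset.disjoint_left]
    intro j hjS hjF
    exact (Finset.mem_compl.mp (Finset.mem_of_mem_filter j hjF)) hjS
  have h2 : cnt (fun j : ↥(Sᶜ : Finset α) => f j.1 - u 0) (u i - u 0)
      = #((Sᶜ : Finset α).filter fun j => f j < u i) := by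
    unfold cnt
    rw [card_filter_coe (Sᶜ : Finset α) (fun j => f j - u 0 < u i - u 0)]
    apply Finset.card_bij (fun j _ => j)
    · intro j hj
      simp only [mem_filter, Finset.mem_compl] at *
      have hc : u 0 ≤ f j := le_of_not_gt fun hlt => hj.1 ((hS j).mp hlt)
      exact ⟨hj.1, by omega⟩
    · intro j₁ _ j₂ _ h; exact h
    · intro j hj
      simp only [mem_filter, Finset.mem_compl] at *
      have hc : u 0 ≤ f j := le_of_not_gt fun hlt => hj.1 ((hS j).mp hlt)
      exact ⟨j, ⟨hj.1, by omega⟩, rfl⟩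
  rw [cnt, hsplit, Finset.card_union_of_disjoint hdisj, h2]

lemma cond_iff_aux {u : ℕ → ℕ} (hu : Monotone u) {f : α → ℕ} {S : Finset α}
    (hS : ∀ j, f j < u 0 ↔ j ∈ S) :
    Cond u f ↔ Cond (fun t => u (t + S.card) - u 0) (fun j : ↥(Sᶜ : Finset α) => f j.1 - u 0) := by
  have hcc : Fintype.card ↥(Sᶜ : Finset α) = Fintype.card α - S.card := by
    rw [Fintype.card_coe, Finset.card_compl]
  have hk : S.card ≤ Fintype.card α := by
    simpa using Finset.card_le_card (Finset.subset_univ S)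
  unfold Cond
  rw [hcc]
  constructor
  · intro h t ht
    have h2 := h (t + S.card) (by omega)
    rw [cnt_split hu hS] at h2
    simp only at h2 ⊢
    omega
  · intro h i hi
    rw [cnt_split hu hS]
    rcases lt_or_ge i S.card with hik | hik
    · omega
    · have h2 := h (i - S.card) (by omega)
      simp only at h2
      have he : i - S.card + S.card = i := by omega
      rw [he] at h2
      omega



def glue (S : Finset α) (c : ℕ) (g : ↥S → Fin c) (d : ↥(Sᶜ : Finset α) → ℕ) : α → ℕ :=
  fun j => if h : j ∈ S then (g ⟨j, h⟩ : ℕ) else d ⟨j, Finset.mem_compl.mpr h⟩ + c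

lemma glue_low (S : Finset α) (c : ℕ) (g : ↥S → Fin c) (d : ↥(Sᶜ : Finset α) → ℕ) :
    ∀ j, glue S c g d j < c ↔ j ∈ S := by
  intro j
  by_cases h : j ∈ S
  · simp only [glue, dif_pos h]
    exact ⟨fun _ => h, fun _ => (g ⟨j, h⟩).2⟩
  · simp only [glue, dif_neg h]
    constructor
    · intro hlt; omega
    · intro hj; exact absurd hj h

lemma glue_restrict (S : Finset α) (c : ℕ) (g : ↥S → Fin c) (d : ↥(Sᶜ : Finset α) → ℕ) :
    (fun j : ↥(Sᶜ : Finset α) => glue S c g d j.1 - c) = d := by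
  funext j
  have hj : j.1 ∉ S := Finset.mem_compl.mp j.2
  simp only [glue, dif_neg hj, Nat.add_sub_cancel]

lemma fiber_card (u : ℕ → ℕ) (hu : Monotone u) (S : Finset α) :
    Nat.card {f : α → ℕ // Cond u f ∧ ∀ j, f j < u 0 ↔ j ∈ S}
      = (u 0) ^ S.card *
        Nat.card {d : ↥(Sᶜ : Finset α) → ℕ // Cond (fun t => u (t + S.card) - u 0) d} := by
  have e : {f : α → ℕ // Cond u f ∧ ∀ j, f j < u 0 ↔ j ∈ S}
      ≃ (↥S → Fin (u 0)) ×
        {d : ↥(Sᶜ : Finset α) → ℕ // Cond (fun t => u (t + S.card) - u 0) d} := by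
    refine ⟨fun f => ⟨fun j => ⟨f.1 j.1, (f.2.2 j.1).mpr j.2⟩,
        ⟨fun j => f.1 j.1 - u 0, (cond_iff_aux hu f.2.2).mp f.2.1⟩⟩,
      fun gd => ⟨glue S (u 0) gd.1 gd.2.1, ?_, glue_low S (u 0) gd.1 gd.2.1⟩, ?_, ?_⟩
    · apply (cond_iff_aux hu (glue_low S (u 0) gd.1 gd.2.1)).mpr
      rw [glue_restrict]
      exact gd.2.2
    · rintro ⟨f, hf, hS⟩
      apply Subtype.ext
      funext j
      by_cases h : j ∈ S
      · simp only [glue, dif_pos h]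
      · simp only [glue, dif_neg h]
        have : u 0 ≤ f j := le_of_not_gt fun hlt => h ((hS j).mp hlt)
        omega
    · rintro ⟨g, d, hd⟩
      refine Prod.ext ?_ ?_
      · funext j
        apply Fin.ext
        simp only [glue, dif_pos j.2]
      · apply Subtype.ext
        simp only
        rw [glue_restrict]
  rw [Nat.card_congr e, Nat.card_prod]
  congr 1
  rw [Nat.card_fun, Nat.card_eq_fintype_card, Nat.card_eq_fintype_card,
    Fintype.card_fin, Fintype.card_coe]

noncomputable def NCI (m k : ℕ) (u : ℕ → ℕ) : ℕ := NC (Fin (m - k)) (fun t => u (t + k) - u 0)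

lemma NC_rec (u : ℕ → ℕ) (hu : Monotone u) :
    NC α u = ∑ k ∈ range (Fintype.card α + 1),
      (Fintype.card α).choose k * ((u 0) ^ k * NCI (Fintype.card α) k u) := by
  classical
  haveI hfin : Finite {f : α → ℕ // Cond u f} := finite_cond u
  have e1 : {f : α → ℕ // Cond u f}
      ≃ Σ S : Finset α, {f : α → ℕ // Cond u f ∧ ∀ j, f j < u 0 ↔ j ∈ S} := by
    refine (Equiv.sigmaFiberEquiv
      (fun f : {f : α → ℕ // Cond u f} => univ.filter fun j => f.1 j < u 0)).symm.trans ?_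
    refine Equiv.sigmaCongrRight fun S => ?_
    refine (Equiv.subtypeSubtypeEquivSubtypeInter (Cond u)
      (fun f => univ.filter (fun j => f j < u 0) = S)).trans (Equiv.subtypeEquivRight ?_)
    intro f
    constructor
    · rintro ⟨h1, h2⟩
      refine ⟨h1, fun j => ?_⟩
      rw [← h2]
      simp
    · rintro ⟨h1, h2⟩
      refine ⟨h1, ?_⟩
      ext j
      simp [h2 j]
  haveI fibFin : ∀ S : Finset α, Finite {f : α → ℕ // Cond u f ∧ ∀ j, f j < u 0 ↔ j ∈ S} :=
    fun S => Finite.of_injective (fun x => (⟨x.1, x.2.1⟩ : {f : α → ℕ // Cond u f}))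
      (by intro x y h; simp only [Subtype.mk.injEq] at h; exact Subtype.ext h)
  haveI : ∀ S : Finset α, Fintype {f : α → ℕ // Cond u f ∧ ∀ j, f j < u 0 ↔ j ∈ S} :=
    fun S => Fintype.ofFinite _
  have hcard : NC α u
      = ∑ S : Finset α, Nat.card {f : α → ℕ // Cond u f ∧ ∀ j, f j < u 0 ↔ j ∈ S} := by
    unfold NC
    rw [Nat.card_congr e1, Nat.card_eq_fintype_card, Fintype.card_sigma]
    exact Finset.sum_congr rfl fun S _ => (Nat.card_eq_fintype_card).symm
  have hfib : ∀ S : Finset α, Nat.card {f : α → ℕ // Cond u f ∧ ∀ j, f j < u 0 ↔ j ∈ S}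
      = (u 0) ^ S.card * NC (Fin (Fintype.card α - S.card)) (fun t => u (t + S.card) - u 0) := by
    intro S
    rw [fiber_card u hu S]
    congr 1
    exact NC_congr (Fintype.equivFinOfCardEq (by rw [Fintype.card_coe, Finset.card_compl])) _
  rw [hcard, Finset.sum_congr rfl fun S _ => hfib S]
  rw [← Finset.powerset_univ, Finset.sum_powerset]
  rw [Finset.card_univ]
  refine Finset.sum_congr rfl fun k hk => ?_
  have hinner : ∀ S ∈ Finset.powersetCard k (univ : Finset α),
      (u 0) ^ S.card * NC (Fin (Fintype.card α - S.card)) (fun t => u (t + S.card) - u 0)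
        = (u 0) ^ k * NCI (Fintype.card α) k u := by
    intro S hS
    have hc : S.card = k := (Finset.mem_powersetCard.mp hS).2
    rw [hc]
    rfl
  rw [Finset.sum_congr rfl hinner, Finset.sum_const, Finset.card_powersetCard,
    Finset.card_univ, smul_eq_mul]


lemma mul_add_lt_iff {b q r w : ℕ} (hr : r < b) : b * q + r < b * w ↔ q < w := by
  constructor
  · intro h
    by_contra hq
    push_neg at hq
    have := Nat.mul_le_mul_left b hq
    omega
  · intro h
    have : q + 1 ≤ w := h
    have := Nat.mul_le_mul_left b this
    have h2 : b * (q + 1) = b * q + b := by ring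
    omega

lemma NC_scale {j b : ℕ} (hb : 0 < b) (v : ℕ → ℕ) :
    NC (Fin j) (fun t => b * v t) = b ^ j * NC (Fin j) v := by
  have hcnt : ∀ (f : Fin j → ℕ) (w : ℕ), cnt (fun t => f t / b) w = cnt f (b * w) := by
    intro f w
    unfold cnt
    congr 1
    apply Finset.filter_congr
    intro t _
    rw [Nat.div_lt_iff_lt_mul hb, mul_comm]
  have e : {f : Fin j → ℕ // Cond (fun t => b * v t) f}
      ≃ {q : Fin j → ℕ // Cond v q} × (Fin j → Fin b) := by
    refine ⟨fun f => ⟨⟨fun t => f.1 t / b, ?_⟩, fun t => ⟨f.1 t % b, Nat.mod_lt _ hb⟩⟩,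
      fun qr => ⟨fun t => b * qr.1.1 t + (qr.2 t : ℕ), ?_⟩, ?_, ?_⟩
    · intro i hi
      rw [Fintype.card_fin] at hi
      rw [hcnt]
      have := f.2 i (by rw [Fintype.card_fin]; exact hi)
      exact this
    · intro i hi
      rw [Fintype.card_fin] at hi
      have h2 := qr.1.2 i (by rw [Fintype.card_fin]; exact hi)
      have heq : cnt (fun t => b * qr.1.1 t + (qr.2 t : ℕ)) (b * v i) = cnt qr.1.1 (v i) := by
        unfold cnt
        congr 1
        apply Finset.filter_congr
        intro t _
        simp only [eq_iff_iff]
        exact mul_add_lt_iff (qr.2 t).2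
      rw [heq]
      exact h2
    · rintro ⟨f, hf⟩
      apply Subtype.ext
      funext t
      simp only
      exact Nat.div_add_mod (f t) b
    · rintro ⟨⟨q, hq⟩, r⟩
      refine Prod.ext ?_ ?_
      · apply Subtype.ext
        funext t
        simp only
        rw [Nat.mul_add_div hb, Nat.div_eq_of_lt (r t).2, add_zero]
      · funext t
        apply Fin.ext
        simp only
        rw [Nat.mul_add_mod, Nat.mod_eq_of_lt (r t).2]
  unfold NC
  rw [Nat.card_congr e, Nat.card_prod, Nat.card_fun, Nat.card_eq_fintype_card (α := Fin j),
    Nat.card_eq_fintype_card (α := Fin b), Fintype.card_fin, Fintype.card_fin]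
  ring

lemma derivId {R : Type*} [CommSemiring R] (m : ℕ) (hm : 1 ≤ m) (x w : R) :
    ∑ k ∈ range (m + 1), (m.choose k : R) * (k : ℕ) * x ^ k * w ^ (m - k)
      = (m : ℕ) * x * (x + w) ^ (m - 1) := by
  obtain ⟨m', rfl⟩ : ∃ m', m = m' + 1 := ⟨m - 1, by omega⟩
  rw [Finset.sum_range_succ']
  have h0 : ((m' + 1).choose 0 : R) * ((0 : ℕ) : R) * x ^ 0 * w ^ (m' + 1 - 0) = 0 := by
    simp
  rw [h0, add_zero]
  have hterm : ∀ k ∈ range (m' + 1),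
      ((m' + 1).choose (k + 1) : R) * ((k + 1 : ℕ) : R) * x ^ (k + 1) * w ^ (m' + 1 - (k + 1))
        = ((m' + 1 : ℕ) : R) * x * ((m'.choose k : R) * x ^ k * w ^ (m' - k)) := by
    intro k _
    have hc : (m' + 1).choose (k + 1) * (k + 1) = (m' + 1) * m'.choose k :=
      (Nat.add_one_mul_choose_eq m' k).symm
    have hsub : m' + 1 - (k + 1) = m' - k := by omega
    calc ((m' + 1).choose (k + 1) : R) * ((k + 1 : ℕ) : R) * x ^ (k + 1) * w ^ (m' + 1 - (k + 1))
        = (((m' + 1).choose (k + 1) * (k + 1) : ℕ) : R) * x ^ (k + 1) * w ^ (m' - k) := by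
          rw [hsub, Nat.cast_mul]
      _ = (((m' + 1) * m'.choose k : ℕ) : R) * x ^ (k + 1) * w ^ (m' - k) := by rw [hc]
      _ = ((m' + 1 : ℕ) : R) * x * ((m'.choose k : R) * x ^ k * w ^ (m' - k)) := by
          rw [Nat.cast_mul]
          ring
  rw [Finset.sum_congr rfl hterm, ← Finset.mul_sum]
  have hpow : ∑ k ∈ range (m' + 1), (m'.choose k : R) * x ^ k * w ^ (m' - k) = (x + w) ^ m' := by
    rw [add_pow]
    exact Finset.sum_congr rfl fun k _ => by ring
  rw [hpow]
  simp [Nat.add_sub_cancel]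

lemma NC_classical : ∀ m c : ℕ, 1 ≤ c → 1 ≤ m →
    NC (Fin m) (fun t => c + t) = c * (c + m) ^ (m - 1) := by
  intro m
  induction m using Nat.strong_induction_on with
  | _ m IH =>
    intro c hc hm
    have hmono : Monotone (fun t => c + t) := fun i j h => by simp; omega
    have hrec := NC_rec (α := Fin m) (fun t => c + t) hmono
    rw [Fintype.card_fin] at hrec
    unfold NCI at hrec
    have hfun : ∀ k : ℕ, (fun t => (fun t => c + t) (t + k) - (fun t => c + t) 0)
        = (fun t : ℕ => k + t) := by
      intro k
      funext t
      simp only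
      omega
    simp only [hfun] at hrec
    simp only [Nat.add_zero] at hrec
    apply Nat.eq_of_mul_eq_mul_left (show 0 < m by omega)
    rw [hrec, Finset.mul_sum]
    have hterm : ∀ k ∈ range (m + 1),
        m * (m.choose k * (c ^ k * NC (Fin (m - k)) (fun t : ℕ => k + t)))
          = m.choose k * k * c ^ k * m ^ (m - k) := by
      intro k hk
      rw [Finset.mem_range] at hk
      rcases Nat.eq_zero_or_pos k with rfl | hkpos
      · have hz : NC (Fin (m - 0)) (fun t : ℕ => 0 + t) = 0 := by
          apply NC_zero_thresh
          · simp
          · rw [Fintype.card_fin]; omega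
        rw [hz]
        ring_nf
      · rcases Nat.lt_or_ge k m with hkm | hkm
        · -- 1 ≤ k < m
          have hik := IH (m - k) (by omega) k hkpos (by omega)
          rw [hik]
          have hkm1 : k + (m - k) = m := by omega
          rw [hkm1]
          have hpow : m * m ^ (m - k - 1) = m ^ (m - k) := by
            have h9 : m - k = (m - k - 1) + 1 := by omega
            conv_rhs => rw [h9]
            rw [pow_succ]
            ring
          calc m * (m.choose k * (c ^ k * (k * m ^ (m - k - 1))))
              = m.choose k * k * c ^ k * (m * m ^ (m - k - 1)) := by ring
            _ = m.choose k * k * c ^ k * m ^ (m - k) := by rw [hpow]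
        · -- k = m
          have hkm' : k = m := by omega
          subst hkm'
          have h1 : NC (Fin (k - k)) (fun t : ℕ => k + t) = 1 := by
            apply NC_nil
            rw [Fintype.card_fin]
            omega
          rw [h1, Nat.choose_self, Nat.sub_self, pow_zero]
          ring
    rw [Finset.sum_congr rfl hterm]
    have hd := derivId (R := ℕ) m hm c m
    simp only [Nat.cast_id] at hd
    rw [hd]
    ring


lemma prime_iff (n a b : ℕ) (hn : 1 ≤ n) (f : Fin n → ℕ) :
    IsPrimeUPF (fun i : Fin n => a + b * (i : ℕ)) f
      ↔ Cond (fun i => a + b * (i - 1)) f := by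
  have hcnt : ∀ t, countLt f t = cnt f t := fun t => rfl
  constructor
  · rintro ⟨h1, h2⟩ i hi
    rw [Fintype.card_fin] at hi
    simp only
    rcases Nat.eq_zero_or_pos i with rfl | hip
    · have h3 := h1 ⟨0, by omega⟩
      simp only [hcnt] at h3
      simpa using h3
    · obtain ⟨i', rfl⟩ : ∃ i', i = i' + 1 := ⟨i - 1, by omega⟩
      have h3 := h2 ⟨i', by omega⟩ (by simpa using hi)
      simp only [hcnt] at h3
      simp only [Nat.add_sub_cancel]
      omega
  · intro h
    constructor
    · intro i
      rw [hcnt]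
      simp only
      rcases Nat.lt_or_ge ((i : ℕ) + 1) n with hlt | hge
      · have h3 := h ((i : ℕ) + 1) (by rw [Fintype.card_fin]; omega)
        simp only [Nat.add_sub_cancel] at h3
        omega
      · have h4 := h (i : ℕ) (by rw [Fintype.card_fin]; exact i.2)
        simp only at h4
        have h5 : a + b * ((i : ℕ) - 1) ≤ a + b * (i : ℕ) :=
          Nat.add_le_add_left (Nat.mul_le_mul_left b (Nat.sub_le _ _)) a
        exact le_trans h4 (cnt_mono f h5)
    · intro i hi
      rw [hcnt]
      simp only
      have h3 := h ((i : ℕ) + 1) (by rw [Fintype.card_fin]; omega)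
      simp only [Nat.add_sub_cancel] at h3
      omega

lemma main_count (n a b : ℕ) (hn : 1 ≤ n) :
    NC (Fin n) (fun i => a + b * (i - 1))
      = a ^ n + ∑ k ∈ range n,
          n.choose k * (a ^ k * (b ^ (n - k) * ((k - 1) * (n - 1) ^ (n - k - 1)))) := by
  have hmono : Monotone (fun i : ℕ => a + b * (i - 1)) := fun i j h =>
    Nat.add_le_add_left (Nat.mul_le_mul_left b (Nat.sub_le_sub_right h 1)) a
  have hrec := NC_rec (α := Fin n) _ hmono
  rw [Fintype.card_fin] at hrec
  unfold NCI at hrec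
  simp only [Nat.zero_sub, Nat.mul_zero, Nat.add_zero] at hrec
  rw [hrec, Finset.sum_range_succ]
  have hlast : NC (Fin (n - n)) (fun t => a + b * (t + n - 1) - a) = 1 := by
    apply NC_nil
    rw [Fintype.card_fin]
    omega
  have hW : ∀ k < n, NC (Fin (n - k)) (fun t => a + b * (t + k - 1) - a)
      = b ^ (n - k) * ((k - 1) * (n - 1) ^ (n - k - 1)) := by
    intro k hk
    rcases Nat.eq_zero_or_pos k with rfl | hkpos
    · have hz : NC (Fin (n - 0)) (fun t => a + b * (t + 0 - 1) - a) = 0 := by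
        apply NC_zero_thresh
        · simp
        · rw [Fintype.card_fin]; omega
      rw [hz]
      simp
    · have hfun : (fun t => a + b * (t + k - 1) - a) = (fun t => b * ((k - 1) + t)) := by
        funext t
        have h9 : t + k - 1 = (k - 1) + t := by omega
        rw [h9]
        omega
      rw [hfun]
      rcases Nat.eq_zero_or_pos b with rfl | hbpos
      · have hz : NC (Fin (n - k)) (fun t => 0 * ((k - 1) + t)) = 0 := by
          apply NC_zero_thresh
          · simp
          · rw [Fintype.card_fin]; omega
        rw [hz]
        have : (0 : ℕ) ^ (n - k) = 0 := by
          apply zero_pow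
          omega
        rw [this]
        ring
      · rw [NC_scale hbpos]
        congr 1
        rcases Nat.eq_or_lt_of_le hkpos with h1 | h2
        · have hz : NC (Fin (n - k)) (fun t => (k - 1) + t) = 0 := by
            apply NC_zero_thresh
            · show k - 1 + 0 = 0
              omega
            · rw [Fintype.card_fin]; omega
          rw [hz]
          have : k - 1 = 0 := by omega
          rw [this]
          ring
        · rw [NC_classical (n - k) (k - 1) (by omega) (by omega)]
          have h9 : (k - 1) + (n - k) = n - 1 := by omega
          have h10 : n - k - 1 = n - k - 1 := rfl
          rw [h9]
  have hsum : ∀ k ∈ range n,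
      n.choose k * (a ^ k * NC (Fin (n - k)) (fun t => a + b * (t + k - 1) - a))
        = n.choose k * (a ^ k * (b ^ (n - k) * ((k - 1) * (n - 1) ^ (n - k - 1)))) := by
    intro k hk
    rw [hW k (Finset.mem_range.mp hk)]
  rw [Finset.sum_congr rfl hsum, hlast, Nat.choose_self]
  ring

lemma binom_sum (n : ℕ) (x w : ℤ) :
    ∑ k ∈ range (n + 1), (n.choose k : ℤ) * x ^ k * w ^ (n - k) = (x + w) ^ n := by
  rw [add_pow]
  exact Finset.sum_congr rfl fun k _ => by ring

end Stmt4Aux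

open Finset Stmt4Aux in
/-- The number of prime `u`-parking functions of length `n` with `u i = a + b * i` is
`(a-b)(a+(n-1)b)^{n-1} + b^n (n-1)^{n-1}` (as an integer). -/
theorem stmt4 (n a b : ℕ) (hn : 1 ≤ n) (ha : 1 ≤ a) :
    (({f : Fin n → ℕ | IsPrimeUPF (fun i : Fin n => a + b * (i : ℕ)) f}.ncard : ℤ))
      = ((a : ℤ) - b) * ((a : ℤ) + ((n : ℤ) - 1) * b) ^ (n - 1)
        + (b : ℤ) ^ n * ((n : ℤ) - 1) ^ (n - 1) := by
  classical
  have h1 : {f : Fin n → ℕ | IsPrimeUPF (fun i : Fin n => a + b * (i : ℕ)) f}.ncard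
      = NC (Fin n) (fun i => a + b * (i - 1)) := by
    rw [← Nat.card_coe_set_eq]
    exact Nat.card_congr (Equiv.subtypeEquivRight fun f => by
      rw [Set.mem_setOf_eq]
      exact prime_iff n a b hn f)
  rw [h1, main_count n a b hn]
  push_cast
  rcases eq_or_lt_of_le hn with h1' | h2'
  · -- n = 1
    obtain rfl : n = 1 := h1'.symm
    norm_num
  · -- n ≥ 2
    set M : ℤ := ((n - 1 : ℕ) : ℤ) with hMdef
    have hM : M = (n : ℤ) - 1 := by
      rw [hMdef, Nat.cast_sub hn, Nat.cast_one]
    have hM0 : M ≠ 0 := by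
      rw [hM]
      have : (2 : ℤ) ≤ (n : ℤ) := by exact_mod_cast h2'
      omega
    rw [← hM]
    have hsplit : ∀ k ∈ range n,
        ((n.choose k : ℤ)) * ((a : ℤ) ^ k * ((b : ℤ) ^ (n - k) * (((k - 1 : ℕ) : ℤ) * M ^ (n - k - 1))))
          = (n.choose k : ℤ) * ((k : ℤ) - 1) * (a : ℤ) ^ k * (b : ℤ) ^ (n - k) * M ^ (n - k - 1)
            + (if k = 0 then (b : ℤ) ^ n * M ^ (n - 1) else 0) := by
      intro k hk
      rcases Nat.eq_zero_or_pos k with rfl | hkpos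
      · rw [if_pos rfl]
        simp only [Nat.zero_sub, Nat.cast_zero, Nat.choose_zero_right, Nat.cast_one, pow_zero,
          Nat.sub_zero]
        ring
      · rw [Nat.cast_sub hkpos, if_neg (by omega), Nat.cast_one]
        ring
    rw [Finset.sum_congr rfl hsplit, Finset.sum_add_distrib, Finset.sum_ite_eq']
    rw [if_pos (show (0 : ℕ) ∈ range n from Finset.mem_range.mpr (by omega))]
    have key : (a : ℤ) ^ n
          + ∑ k ∈ range n, (n.choose k : ℤ) * ((k : ℤ) - 1) * (a : ℤ) ^ k * (b : ℤ) ^ (n - k) * M ^ (n - k - 1)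
        = ((a : ℤ) - b) * ((a : ℤ) + M * b) ^ (n - 1) := by
      apply mul_left_cancel₀ hM0
      have hterm : ∀ k ∈ range n,
          M * ((n.choose k : ℤ) * ((k : ℤ) - 1) * (a : ℤ) ^ k * (b : ℤ) ^ (n - k) * M ^ (n - k - 1))
            = (n.choose k : ℤ) * ((k : ℤ) - 1) * (a : ℤ) ^ k * (M * b) ^ (n - k) := by
        intro k hk
        rw [Finset.mem_range] at hk
        have hMp : M * M ^ (n - k - 1) = M ^ (n - k) := by
          have h9 : M ^ (n - k) = M ^ ((n - k - 1) + 1) := by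
            congr 1
            omega
          rw [h9, pow_succ]
          ring
        calc M * ((n.choose k : ℤ) * ((k : ℤ) - 1) * (a : ℤ) ^ k * (b : ℤ) ^ (n - k) * M ^ (n - k - 1))
            = ((n.choose k : ℤ) * ((k : ℤ) - 1) * (a : ℤ) ^ k * (b : ℤ) ^ (n - k)) * (M * M ^ (n - k - 1)) := by
              ring
          _ = ((n.choose k : ℤ) * ((k : ℤ) - 1) * (a : ℤ) ^ k * (b : ℤ) ^ (n - k)) * M ^ (n - k) := by
              rw [hMp]
          _ = (n.choose k : ℤ) * ((k : ℤ) - 1) * (a : ℤ) ^ k * (M * b) ^ (n - k) := by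
              rw [mul_pow]
              ring
      have hS2b : ∑ k ∈ range (n + 1),
            (n.choose k : ℤ) * ((k : ℤ) - 1) * (a : ℤ) ^ k * (M * b) ^ (n - k)
          = (∑ k ∈ range n, (n.choose k : ℤ) * ((k : ℤ) - 1) * (a : ℤ) ^ k * (M * b) ^ (n - k))
            + M * (a : ℤ) ^ n := by
        rw [Finset.sum_range_succ, Nat.choose_self, Nat.sub_self, pow_zero, hM]
        push_cast
        try ring
      have hS2a : ∑ k ∈ range (n + 1),
            (n.choose k : ℤ) * ((k : ℤ) - 1) * (a : ℤ) ^ k * (M * b) ^ (n - k)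
          = (n : ℤ) * a * ((a : ℤ) + M * b) ^ (n - 1) - ((a : ℤ) + M * b) ^ n := by
        have hd := derivId (R := ℤ) n hn (a : ℤ) (M * b)
        have hb := binom_sum n (a : ℤ) (M * b)
        calc ∑ k ∈ range (n + 1), (n.choose k : ℤ) * ((k : ℤ) - 1) * (a : ℤ) ^ k * (M * b) ^ (n - k)
            = (∑ k ∈ range (n + 1), (n.choose k : ℤ) * (k : ℕ) * (a : ℤ) ^ k * (M * b) ^ (n - k))
              - ∑ k ∈ range (n + 1), (n.choose k : ℤ) * (a : ℤ) ^ k * (M * b) ^ (n - k) := by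
              rw [← Finset.sum_sub_distrib]
              exact Finset.sum_congr rfl fun k _ => by push_cast; ring
          _ = (n : ℤ) * a * ((a : ℤ) + M * b) ^ (n - 1) - ((a : ℤ) + M * b) ^ n := by
              rw [hd, hb]
      calc M * ((a : ℤ) ^ n
              + ∑ k ∈ range n, (n.choose k : ℤ) * ((k : ℤ) - 1) * (a : ℤ) ^ k * (b : ℤ) ^ (n - k) * M ^ (n - k - 1))
          = M * (a : ℤ) ^ n
              + ∑ k ∈ range n, M * ((n.choose k : ℤ) * ((k : ℤ) - 1) * (a : ℤ) ^ k * (b : ℤ) ^ (n - k) * M ^ (n - k - 1)) := by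
            rw [mul_add, Finset.mul_sum]
        _ = M * (a : ℤ) ^ n
              + ∑ k ∈ range n, (n.choose k : ℤ) * ((k : ℤ) - 1) * (a : ℤ) ^ k * (M * b) ^ (n - k) := by
            rw [Finset.sum_congr rfl hterm]
        _ = ∑ k ∈ range (n + 1), (n.choose k : ℤ) * ((k : ℤ) - 1) * (a : ℤ) ^ k * (M * b) ^ (n - k) := by
            rw [hS2b]
            ring
        _ = (n : ℤ) * a * ((a : ℤ) + M * b) ^ (n - 1) - ((a : ℤ) + M * b) ^ n := hS2a
        _ = M * (((a : ℤ) - b) * ((a : ℤ) + M * b) ^ (n - 1)) := by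
            have hX : ((a : ℤ) + M * b) ^ n = ((a : ℤ) + M * b) ^ (n - 1) * ((a : ℤ) + M * b) := by
              rw [← pow_succ]
              congr 1
              omega
            rw [hX, hM]
            ring
    linear_combination key
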